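/- Let θᵢ = e^{(lᵢ − lⱼ − lₖ)/2}, xᵢ = (θⱼ+θₖ−θᵢ)/2, uᵢ = ∫₀^{lᵢ} e^{−h e^{−t}} dt, and μ(x) = ∫₀^{x} e^{h t²} dt. Then the matrix H = [∂μ(xᵢ)/∂uⱼ] is negative definite at every point, and hence the function F_h with ∇F_h = (μ(x₁),μ(x₂),μ(x₃)) in the u-variables is strictly concave on its convex domain. -/

import Mathlib

/-- The generalized angle opposite the `i`-th edge: `θᵢ = exp((lᵢ - lⱼ - lₖ)/2)`. -/
noncomputable def thetaF (l : Fin 3 → ℝ) (i : Fin 3) : ℝ :=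
  Real.exp (l i - (l 0 + l 1 + l 2) / 2)

/-- The x-invariant `xᵢ = (θⱼ + θₖ - θᵢ)/2`. -/
noncomputable def xF (l : Fin 3 → ℝ) (i : Fin 3) : ℝ :=
  (thetaF l 0 + thetaF l 1 + thetaF l 2) / 2 - thetaF l i

/-- `μ(x) = ∫₀ˣ e^{h t²} dt`. -/
noncomputable def mu (h x : ℝ) : ℝ := ∫ t in (0:ℝ)..x, Real.exp (h * t ^ 2)

/-- The change of variables `uᵢ = ∫₀^{lᵢ} e^{-h e^{-t}} dt`. -/
noncomputable def uF (h : ℝ) (l : Fin 3 → ℝ) : Fin 3 → ℝ :=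
  fun i => ∫ t in (0:ℝ)..(l i), Real.exp (-h * Real.exp (-t))

/-- The matrix `H = [∂μ(xᵢ)/∂uⱼ]` expressed via the chain rule, using
`duⱼ/dlⱼ = e^{-h e^{-lⱼ}}`. -/
noncomputable def Hmat (h : ℝ) (l : Fin 3 → ℝ) (i j : Fin 3) : ℝ :=
  deriv (fun s => mu h (xF (Function.update l j s) i)) (l j) /
    Real.exp (-h * Real.exp (-l j))

open Real Function Set


lemma hasDerivAt_mu (h x : ℝ) : HasDerivAt (mu h) (Real.exp (h * x ^ 2)) x := by
  have hc : Continuous fun t : ℝ => Real.exp (h * t ^ 2) := by continuity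
  exact (hc.integral_hasStrictDerivAt 0 x).hasDerivAt

lemma hasDerivAt_theta_comp {ℓ : ℝ → Fin 3 → ℝ} {ℓ' : Fin 3 → ℝ} {t : ℝ}
    (H : ∀ j, HasDerivAt (fun s => ℓ s j) (ℓ' j) t) (k : Fin 3) :
    HasDerivAt (fun s => thetaF (ℓ s) k)
      ((ℓ' k - (ℓ' 0 + ℓ' 1 + ℓ' 2) / 2) * thetaF (ℓ t) k) t := by
  have h1 : HasDerivAt (fun s => ℓ s k - (ℓ s 0 + ℓ s 1 + ℓ s 2) / 2)
      (ℓ' k - (ℓ' 0 + ℓ' 1 + ℓ' 2) / 2) t :=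
    (H k).sub ((((H 0).add (H 1)).add (H 2)).div_const 2)
  simpa [thetaF, mul_comm] using h1.exp

lemma hasDerivAt_xF_comp {ℓ : ℝ → Fin 3 → ℝ} {ℓ' : Fin 3 → ℝ} {t : ℝ}
    (H : ∀ j, HasDerivAt (fun s => ℓ s j) (ℓ' j) t) (i : Fin 3) :
    HasDerivAt (fun s => xF (ℓ s) i)
      (((ℓ' 0 - (ℓ' 0 + ℓ' 1 + ℓ' 2) / 2) * thetaF (ℓ t) 0 +
        (ℓ' 1 - (ℓ' 0 + ℓ' 1 + ℓ' 2) / 2) * thetaF (ℓ t) 1 +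
        (ℓ' 2 - (ℓ' 0 + ℓ' 1 + ℓ' 2) / 2) * thetaF (ℓ t) 2) / 2 -
       (ℓ' i - (ℓ' 0 + ℓ' 1 + ℓ' 2) / 2) * thetaF (ℓ t) i) t := by
  have := ((((hasDerivAt_theta_comp H 0).add (hasDerivAt_theta_comp H 1)).add
      (hasDerivAt_theta_comp H 2)).div_const 2).sub (hasDerivAt_theta_comp H i)
  exact this

lemma hasDerivAt_muxF_comp (h : ℝ) {ℓ : ℝ → Fin 3 → ℝ} {ℓ' : Fin 3 → ℝ} {t : ℝ}
    (H : ∀ j, HasDerivAt (fun s => ℓ s j) (ℓ' j) t) (i : Fin 3) :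
    HasDerivAt (fun s => mu h (xF (ℓ s) i))
      (Real.exp (h * xF (ℓ t) i ^ 2) *
       (((ℓ' 0 - (ℓ' 0 + ℓ' 1 + ℓ' 2) / 2) * thetaF (ℓ t) 0 +
        (ℓ' 1 - (ℓ' 0 + ℓ' 1 + ℓ' 2) / 2) * thetaF (ℓ t) 1 +
        (ℓ' 2 - (ℓ' 0 + ℓ' 1 + ℓ' 2) / 2) * thetaF (ℓ t) 2) / 2 -
       (ℓ' i - (ℓ' 0 + ℓ' 1 + ℓ' 2) / 2) * thetaF (ℓ t) i)) t :=
  by have := (hasDerivAt_mu h (xF (ℓ t) i)).comp t (hasDerivAt_xF_comp H i); exact this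

noncomputable def DxF (l : Fin 3 → ℝ) (i j : Fin 3) : ℝ :=
  (((if (0:Fin 3) = j then (1:ℝ) else 0) - 1/2) * thetaF l 0 +
   ((if (1:Fin 3) = j then (1:ℝ) else 0) - 1/2) * thetaF l 1 +
   ((if (2:Fin 3) = j then (1:ℝ) else 0) - 1/2) * thetaF l 2) / 2 -
  ((if i = j then (1:ℝ) else 0) - 1/2) * thetaF l i

lemma hasDerivAt_update' (l : Fin 3 → ℝ) (j k : Fin 3) :
    HasDerivAt (fun s => Function.update l j s k) (if k = j then (1:ℝ) else 0) (l j) := by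
  by_cases hk : k = j
  · subst hk
    simp only [Function.update_self, if_pos rfl]
    exact hasDerivAt_id _
  · simp only [Function.update_of_ne hk, if_neg hk]
    exact hasDerivAt_const _ _

lemma Hmat_eq (h : ℝ) (l : Fin 3 → ℝ) (i j : Fin 3) :
    Hmat h l i j =
      Real.exp (h * xF l i ^ 2) * DxF l i j * Real.exp (h * Real.exp (-l j)) := by
  have H := hasDerivAt_muxF_comp h (ℓ := fun s => Function.update l j s)
      (ℓ' := fun k => if k = j then (1:ℝ) else 0) (t := l j) (hasDerivAt_update' l j) i
  rw [Function.update_eq_self] at H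
  have hS : (if (0:Fin 3) = j then (1:ℝ) else 0) + (if (1:Fin 3) = j then (1:ℝ) else 0)
      + (if (2:Fin 3) = j then (1:ℝ) else 0) = 1 := by
    fin_cases j <;> norm_num [Fin.ext_iff]
  rw [Hmat, H.deriv, show -h * Real.exp (-l j) = -(h * Real.exp (-l j)) by ring,
    Real.exp_neg, div_eq_mul_inv, inv_inv]
  rw [DxF, hS]

lemma theta_pos (l : Fin 3 → ℝ) (i : Fin 3) : 0 < thetaF l i := Real.exp_pos _

lemma exp_neg_l0 (l : Fin 3 → ℝ) : Real.exp (-l 0) = thetaF l 1 * thetaF l 2 := by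
  rw [thetaF, thetaF, ← Real.exp_add]; congr 1; ring

lemma exp_neg_l1 (l : Fin 3 → ℝ) : Real.exp (-l 1) = thetaF l 0 * thetaF l 2 := by
  rw [thetaF, thetaF, ← Real.exp_add]; congr 1; ring

lemma exp_neg_l2 (l : Fin 3 → ℝ) : Real.exp (-l 2) = thetaF l 0 * thetaF l 1 := by
  rw [thetaF, thetaF, ← Real.exp_add]; congr 1; ring

lemma bracket_pos {a b c w0 w1 w2 : ℝ} (ha : 0 < a) (hb : 0 < b) (hc : 0 < c)
    (hw : ¬ (w0 = 0 ∧ w1 = 0 ∧ w2 = 0)) :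
    0 < a * (w1 + w2 - w0) ^ 2 + b * (w0 + w2 - w1) ^ 2 + c * (w0 + w1 - w2) ^ 2 := by
  by_contra hle
  push_neg at hle
  have t1 : 0 ≤ a * (w1 + w2 - w0) ^ 2 := by positivity
  have t2 : 0 ≤ b * (w0 + w2 - w1) ^ 2 := by positivity
  have t3 : 0 ≤ c * (w0 + w1 - w2) ^ 2 := by positivity
  have z1 : (w1 + w2 - w0) ^ 2 ≤ 0 := by nlinarith
  have z2 : (w0 + w2 - w1) ^ 2 ≤ 0 := by nlinarith
  have z3 : (w0 + w1 - w2) ^ 2 ≤ 0 := by nlinarith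
  have e1 : w1 + w2 - w0 = 0 := by nlinarith [sq_nonneg (w1 + w2 - w0)]
  have e2 : w0 + w2 - w1 = 0 := by nlinarith [sq_nonneg (w0 + w2 - w1)]
  have e3 : w0 + w1 - w2 = 0 := by nlinarith [sq_nonneg (w0 + w1 - w2)]
  exact hw ⟨by linarith, by linarith, by linarith⟩

lemma Hmat_quadform_neg (h : ℝ) (l : Fin 3 → ℝ) (v : Fin 3 → ℝ) (hv : v ≠ 0) :
    ∑ i : Fin 3, ∑ j : Fin 3, v i * Hmat h l i j * v j < 0 := by
  have ha := theta_pos l 0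
  have hb := theta_pos l 1
  have hc := theta_pos l 2
  set a := thetaF l 0 with hadef
  set b := thetaF l 1 with hbdef
  set c := thetaF l 2 with hcdef
  set K : ℝ := Real.exp (h * Real.exp (-l 0) - h * xF l 0 ^ 2) with hK
  have hKpos : 0 < K := Real.exp_pos _
  have E0 : Real.exp (h * Real.exp (-l 0)) = K * Real.exp (h * xF l 0 ^ 2) := by
    rw [hK, ← Real.exp_add]; congr 1; ring
  have E1 : Real.exp (h * Real.exp (-l 1)) = K * Real.exp (h * xF l 1 ^ 2) := by
    rw [hK, ← Real.exp_add]
    congr 1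
    rw [exp_neg_l0, exp_neg_l1]
    simp only [xF, ← hadef, ← hbdef, ← hcdef]
    ring
  have E2 : Real.exp (h * Real.exp (-l 2)) = K * Real.exp (h * xF l 2 ^ 2) := by
    rw [hK, ← Real.exp_add]
    congr 1
    rw [exp_neg_l0, exp_neg_l2]
    simp only [xF, ← hadef, ← hbdef, ← hcdef]
    ring
  set A : ℝ := Real.exp (h * xF l 0 ^ 2) with hA
  set B : ℝ := Real.exp (h * xF l 1 ^ 2) with hB
  set C : ℝ := Real.exp (h * xF l 2 ^ 2) with hC
  have hApos : 0 < A := Real.exp_pos _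
  have hBpos : 0 < B := Real.exp_pos _
  have hCpos : 0 < C := Real.exp_pos _
  have hvv : ¬ (v 0 * A = 0 ∧ v 1 * B = 0 ∧ v 2 * C = 0) := by
    rintro ⟨h0, h1, h2⟩
    apply hv
    funext i
    fin_cases i
    · exact (mul_eq_zero.1 h0).resolve_right hApos.ne'
    · exact (mul_eq_zero.1 h1).resolve_right hBpos.ne'
    · exact (mul_eq_zero.1 h2).resolve_right hCpos.ne'
  have hpos : 0 < K * (a * (v 1 * B + v 2 * C - v 0 * A) ^ 2 +
      b * (v 0 * A + v 2 * C - v 1 * B) ^ 2 + c * (v 0 * A + v 1 * B - v 2 * C) ^ 2) :=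
    mul_pos hKpos (bracket_pos ha hb hc hvv)
  simp only [Fin.sum_univ_three, Hmat_eq, DxF, E0, E1, E2, ← hadef, ← hbdef, ← hcdef,
    ← hA, ← hB, ← hC]
  norm_num [Fin.ext_iff]
  nlinarith [hpos]

noncomputable def gg (h x : ℝ) : ℝ := ∫ t in (0:ℝ)..x, Real.exp (-h * Real.exp (-t))

lemma uF_eq (h : ℝ) (l : Fin 3 → ℝ) : uF h l = fun i => gg h (l i) := rfl

lemma hasDerivAt_gg (h x : ℝ) : HasDerivAt (gg h) (Real.exp (-h * Real.exp (-x))) x := by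
  have hc : Continuous fun t : ℝ => Real.exp (-h * Real.exp (-t)) := by continuity
  exact (hc.integral_hasStrictDerivAt 0 x).hasDerivAt

lemma gg_mono (h : ℝ) : StrictMono (gg h) := by
  apply strictMono_of_deriv_pos
  intro x
  rw [(hasDerivAt_gg h x).deriv]
  exact Real.exp_pos _

lemma gg_cont (h : ℝ) : Continuous (gg h) :=
  Differentiable.continuous (fun x => (hasDerivAt_gg h x).differentiableAt)

lemma isOpen_range_gg (h : ℝ) : IsOpen (Set.range (gg h)) := by
  rw [isOpen_iff_mem_nhds]
  rintro y ⟨x, rfl⟩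
  have hsub : Set.Ioo (gg h (x - 1)) (gg h (x + 1)) ⊆ Set.range (gg h) := by
    refine subset_trans (intermediate_value_Ioo (by linarith) (gg_cont h).continuousOn) ?_
    exact (Set.image_subset_range _ _)
  exact Filter.mem_of_superset (isOpen_Ioo.mem_nhds
    ⟨gg_mono h (by linarith), gg_mono h (by linarith)⟩) hsub

noncomputable def ggInv (h : ℝ) : ℝ → ℝ := Function.invFun (gg h)

lemma gg_ggInv (h : ℝ) {y : ℝ} (hy : y ∈ Set.range (gg h)) : gg h (ggInv h y) = y :=
  Function.invFun_eq hy

lemma ggInv_gg (h x : ℝ) : ggInv h (gg h x) = x :=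
  Function.leftInverse_invFun (gg_mono h).injective x

lemma continuousAt_ggInv (h : ℝ) {y : ℝ} (hy : y ∈ Set.range (gg h)) :
    ContinuousAt (ggInv h) y := by
  obtain ⟨x, rfl⟩ := hy
  have hx : ggInv h (gg h x) = x := ggInv_gg h x
  rw [ContinuousAt, hx]
  refine tendsto_order.2 ⟨fun a ha => ?_, fun b hb => ?_⟩
  · filter_upwards [isOpen_Ioi.mem_nhds (show gg h x ∈ Set.Ioi (gg h a) from gg_mono h ha),
      (isOpen_range_gg h).mem_nhds ⟨x, rfl⟩] with z hz hzr
    obtain ⟨w, rfl⟩ := hzr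
    rw [ggInv_gg]
    exact (gg_mono h).lt_iff_lt.1 hz
  · filter_upwards [isOpen_Iio.mem_nhds (show gg h x ∈ Set.Iio (gg h b) from gg_mono h hb),
      (isOpen_range_gg h).mem_nhds ⟨x, rfl⟩] with z hz hzr
    obtain ⟨w, rfl⟩ := hzr
    rw [ggInv_gg]
    exact (gg_mono h).lt_iff_lt.1 hz

lemma hasDerivAt_ggInv (h : ℝ) {y : ℝ} (hy : y ∈ Set.range (gg h)) :
    HasDerivAt (ggInv h) (Real.exp (h * Real.exp (-(ggInv h y)))) y := by
  have hd : HasDerivAt (gg h) (Real.exp (-h * Real.exp (-(ggInv h y)))) (ggInv h y) :=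
    hasDerivAt_gg h _
  have hne : Real.exp (-h * Real.exp (-(ggInv h y))) ≠ 0 := (Real.exp_pos _).ne'
  have hev : ∀ᶠ z in nhds y, gg h (ggInv h z) = z := by
    filter_upwards [(isOpen_range_gg h).mem_nhds hy] with z hz
    exact gg_ggInv h hz
  have := HasDerivAt.of_local_left_inverse (continuousAt_ggInv h hy) hd hne hev
  convert this using 1
  · rfl
  rw [← Real.exp_neg]
  congr 1
  ring

lemma mem_range_gg_of_mem {h : ℝ} {y : Fin 3 → ℝ} (hy : y ∈ Set.range (uF h)) (j : Fin 3) :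
    y j ∈ Set.range (gg h) := by
  obtain ⟨m, rfl⟩ := hy
  exact ⟨m j, rfl⟩

lemma convex_range_uF (h : ℝ) : Convex ℝ (Set.range (uF h)) := by
  have hr : Set.range (uF h) = Set.univ.pi (fun _ : Fin 3 => Set.range (gg h)) := by
    ext y
    constructor
    · rintro ⟨m, rfl⟩ j _
      exact ⟨m j, rfl⟩
    · intro hy
      choose m hm using fun i => hy i (Set.mem_univ i)
      exact ⟨m, funext hm⟩
  rw [hr]
  refine convex_pi fun i _ => ?_
  have : IsPreconnected (Set.range (gg h)) := by
    rw [← Set.image_univ]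
    exact isPreconnected_univ.image _ (gg_cont h).continuousOn
  exact this.ordConnected.convex

theorem stmt10 (h : ℝ) :
    (∀ l : Fin 3 → ℝ, ∀ v : Fin 3 → ℝ, v ≠ 0 →
      ∑ i : Fin 3, ∑ j : Fin 3, v i * Hmat h l i j * v j < 0) ∧
    (∀ F : (Fin 3 → ℝ) → ℝ,
      (∀ l : Fin 3 → ℝ, HasFDerivAt F
        (∑ i : Fin 3, mu h (xF l i) •
          (ContinuousLinearMap.proj i : (Fin 3 → ℝ) →L[ℝ] ℝ)) (uF h l)) →
      StrictConcaveOn ℝ (Set.range (uF h)) F) := by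
  refine ⟨fun l v hv => Hmat_quadform_neg h l v hv, ?_⟩
  intro F hF
  refine ⟨convex_range_uF h, ?_⟩
  intro p hp q hq hpq aa bb haa hbb hab
  set d : Fin 3 → ℝ := q - p with hd
  have hdne : d ≠ 0 := sub_ne_zero.2 hpq.symm
  set ℓ : ℝ → Fin 3 → ℝ := fun t j => ggInv h (p j + t * d j) with hℓ
  have hmem : ∀ t ∈ Set.Icc (0:ℝ) 1, p + t • d ∈ Set.range (uF h) := by
    intro t ht
    simpa [hd] using (convex_range_uF h).add_smul_sub_mem hp hq ht
  have hcoords : ∀ t ∈ Set.Icc (0:ℝ) 1, ∀ j, p j + t * d j ∈ Set.range (gg h) := by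
    intro t ht j
    have := mem_range_gg_of_mem (hmem t ht) j
    simpa using this
  have huℓ : ∀ t ∈ Set.Icc (0:ℝ) 1, uF h (ℓ t) = p + t • d := by
    intro t ht
    funext j
    show gg h (ggInv h (p j + t * d j)) = (p + t • d) j
    rw [gg_ggInv h (hcoords t ht j)]
    simp
  have hℓd : ∀ t ∈ Set.Icc (0:ℝ) 1, ∀ j, HasDerivAt (fun s => ℓ s j)
      (Real.exp (h * Real.exp (-(ℓ t j))) * d j) t := by
    intro t ht j
    have hinner : HasDerivAt (fun s : ℝ => p j + s * d j) (d j) t := by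
      simpa using ((hasDerivAt_id t).mul_const (d j)).const_add (p j)
    have := (hasDerivAt_ggInv h (hcoords t ht j)).comp t hinner
    exact this
  set γ : ℝ → ℝ := fun t => ∑ i : Fin 3, mu h (xF (ℓ t) i) * d i with hγdef
  have hγd : ∀ t ∈ Set.Icc (0:ℝ) 1, HasDerivAt γ
      (∑ i : Fin 3, ∑ j : Fin 3, d i * Hmat h (ℓ t) i j * d j) t := by
    intro t ht
    have D := fun i => hasDerivAt_muxF_comp h
      (ℓ' := fun j => Real.exp (h * Real.exp (-(ℓ t j))) * d j) (hℓd t ht) i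
    have hγeq : γ = fun s => mu h (xF (ℓ s) 0) * d 0 + mu h (xF (ℓ s) 1) * d 1 +
        mu h (xF (ℓ s) 2) * d 2 := by
      funext s; simp [hγdef, Fin.sum_univ_three]
    rw [hγeq]
    have hsum := (((D 0).mul_const (d 0)).add ((D 1).mul_const (d 1))).add ((D 2).mul_const (d 2))
    convert hsum using 1
    · rfl
    · rfl
    · rfl
    simp only [Fin.sum_univ_three, Hmat_eq, DxF]
    norm_num [Fin.ext_iff]
    ring
  have hγanti : StrictAntiOn γ (Set.Icc 0 1) := by
    refine strictAntiOn_of_deriv_neg (convex_Icc 0 1)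
      (fun x hx => ((hγd x hx).continuousAt).continuousWithinAt) ?_
    intro x hx
    rw [interior_Icc] at hx
    rw [(hγd x (Set.Ioo_subset_Icc_self hx)).deriv]
    exact Hmat_quadform_neg h (ℓ x) d hdne
  set φ : ℝ → ℝ := fun t => F (p + t • d) with hφdef
  have hφd : ∀ t ∈ Set.Icc (0:ℝ) 1, HasDerivAt φ (γ t) t := by
    intro t ht
    have hFd := hF (ℓ t)
    rw [huℓ t ht] at hFd
    have hpath : HasDerivAt (fun s : ℝ => p + s • d) d t := by
      simpa using ((hasDerivAt_id t).smul_const d).const_add p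
    have := hFd.comp_hasDerivAt t hpath
    convert this using 1 <;> rfl
  have hφconc : StrictConcaveOn ℝ (Set.Icc (0:ℝ) 1) φ := by
    refine StrictAntiOn.strictConcaveOn_of_deriv (convex_Icc 0 1)
      (fun x hx => ((hφd x hx).continuousAt).continuousWithinAt) ?_
    rw [interior_Icc]
    intro x hx y hy hxy
    rw [(hφd x (Set.Ioo_subset_Icc_self hx)).deriv,
      (hφd y (Set.Ioo_subset_Icc_self hy)).deriv]
    exact hγanti (Set.Ioo_subset_Icc_self hx) (Set.Ioo_subset_Icc_self hy) hxy
  have key := hφconc.2 (Set.left_mem_Icc.2 zero_le_one) (Set.right_mem_Icc.2 zero_le_one)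
    (by norm_num : (0:ℝ) ≠ 1) haa hbb hab
  have e0 : φ 0 = F p := by simp [hφdef]
  have e1 : φ 1 = F q := by simp [hφdef, hd]
  have e2 : φ (aa • 0 + bb • 1) = F (aa • p + bb • q) := by
    have harg : p + (aa • (0:ℝ) + bb • 1) • d = aa • p + bb • q := by
      funext i
      simp only [hd, Pi.add_apply, Pi.smul_apply, Pi.sub_apply, smul_eq_mul]
      linear_combination (-(p i)) * hab
    simp only [hφdef, harg]
  rw [e0, e1, e2] at key
  exact key
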